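/- arXiv:2104.07426 — 4 statements merged into one kernel-verified Lean document; each statement's English description precedes it below -/
import Mathlib

section
/- Let n ≥ 1 and let q₁, …, q_{n+2} ∈ 𝕊ⁿ ⊂ ℝ^{n+1} be the vertices of a regular simplex inscribed in the unit sphere (so Σ_{i=1}^{n+2} q_i = 0 and ⟨q_i, q_j⟩ = −1/(n+1) for i ≠ j). Define linear functions l_i(y) = ⟨q_i, y⟩ and set h(y) = Σ_{i<j<k, all distinct} l_i(y) l_j(y) l_k(y) (the third elementary symmetric polynomial in l₁(y), …, l_{n+2}(y)). Then h is a harmonic polynomial on ℝ^{n+1}: Δh = 0. -/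
open Finset
open scoped RealInnerProductSpace

lemma pe1 {α : Type*} [DecidableEq α] {x y : α} (h : x ≠ y) :
    ({x, y} : Finset α).erase x = {y} := by
  rw [Finset.erase_insert (by simp [h])]

lemma pe2 {α : Type*} [DecidableEq α] {x y : α} (h : x ≠ y) :
    ({x, y} : Finset α).erase y = {x} := by
  rw [Finset.pair_comm]; exact pe1 h.symm

lemma c1 {α : Type*} [DecidableEq α] (s : Finset α) (hs : s.card = 3) (f : α → ℝ) :
    ∑ i ∈ s, ∑ j ∈ s.erase i, ∏ k ∈ (s.erase i).erase j, f k = 2 * ∑ k ∈ s, f k := by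
  obtain ⟨a, b, c, hab, hac, hbc, rfl⟩ := Finset.card_eq_three.mp hs
  have h1 : ({a,b,c} : Finset α).erase a = {b,c} := by
    rw [Finset.erase_insert]; simp [hab, hac]
  have h2 : ({a,b,c} : Finset α).erase b = {a,c} := by
    ext x; simp [Finset.mem_erase, Finset.mem_insert]
    constructor
    · rintro ⟨h, (h'|h'|h')⟩ <;> simp_all
    · rintro (rfl|rfl) <;> simp_all [hab.symm, Ne.symm hbc, hbc]
  have h3 : ({a,b,c} : Finset α).erase c = {a,b} := by
    ext x; simp [Finset.mem_erase, Finset.mem_insert]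
    constructor
    · rintro ⟨h, (h'|h'|h')⟩ <;> simp_all
    · rintro (rfl|rfl) <;> simp_all [hac.symm, hbc.symm]
  rw [Finset.sum_insert (by simp [hab, hac]), Finset.sum_insert (by simp [hbc]),
    Finset.sum_singleton, Finset.sum_insert (by simp [hab, hac]),
    Finset.sum_insert (by simp [hbc]), Finset.sum_singleton, h1, h2, h3]
  rw [Finset.sum_insert (by simp [hbc]), Finset.sum_singleton,
      Finset.sum_insert (by simp [hac]), Finset.sum_singleton,
      Finset.sum_insert (by simp [hab]), Finset.sum_singleton]
  rw [pe1 hbc, pe2 hbc, pe1 hac, pe2 hac, pe1 hab, pe2 hab]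
  simp only [Finset.prod_singleton]
  ring

lemma c2 {α : Type*} [Fintype α] [DecidableEq α] (k : α) (r : ℕ) :
    ((Finset.univ.powersetCard (r+1)).filter (fun s => k ∈ s)).card
      = Nat.choose (Fintype.card α - 1) r := by
  rw [← Finset.card_univ, ← Finset.card_erase_of_mem (Finset.mem_univ k),
    ← Finset.card_powersetCard]
  apply Finset.card_bij (fun s _ => s.erase k)
  · intro s hs
    simp only [Finset.mem_filter, Finset.mem_powersetCard] at hs ⊢
    refine ⟨?_, ?_⟩
    · intro x hx
      simp only [Finset.mem_erase] at hx ⊢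
      exact ⟨hx.1, Finset.mem_univ x⟩
    · rw [Finset.card_erase_of_mem hs.2, hs.1.2]; omega
  · intro s hs t ht hst
    simp only [Finset.mem_filter] at hs ht
    rw [← Finset.insert_erase hs.2, ← Finset.insert_erase ht.2, hst]
  · intro t ht
    simp only [Finset.mem_powersetCard] at ht
    have hkt : k ∉ t := fun hk => (Finset.mem_erase.mp (ht.1 hk)).1 rfl
    refine ⟨insert k t, ?_, ?_⟩
    · simp only [Finset.mem_filter, Finset.mem_powersetCard]
      exact ⟨⟨Finset.subset_univ _, by rw [Finset.card_insert_of_notMem hkt, ht.2]⟩,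
        Finset.mem_insert_self k t⟩
    · rw [Finset.erase_insert hkt]

lemma d1 {m : ℕ} (q : Fin (m+2) → EuclideanSpace ℝ (Fin (m+1)))
    (z : EuclideanSpace ℝ (Fin (m+1))) :
    HasFDerivAt (fun y : EuclideanSpace ℝ (Fin (m+1)) =>
      ∑ s ∈ (Finset.univ : Finset (Fin (m + 2))).powersetCard 3, ∏ i ∈ s, ⟪q i, y⟫)
      (∑ s ∈ (Finset.univ : Finset (Fin (m + 2))).powersetCard 3,
        ∑ i ∈ s, (∏ j ∈ s.erase i, ⟪q j, z⟫) • (innerSL ℝ (q i))) z := by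
  apply HasFDerivAt.fun_sum
  intro s _
  exact HasFDerivAt.finset_prod (fun i _ => (innerSL ℝ (q i)).hasFDerivAt)

lemma d2 {m : ℕ} (q : Fin (m+2) → EuclideanSpace ℝ (Fin (m+1)))
    (v y : EuclideanSpace ℝ (Fin (m+1))) :
    HasFDerivAt (fun z : EuclideanSpace ℝ (Fin (m+1)) =>
      ∑ s ∈ (Finset.univ : Finset (Fin (m + 2))).powersetCard 3,
        ∑ i ∈ s, (∏ j ∈ s.erase i, ⟪q j, z⟫) * ⟪q i, v⟫)
      (∑ s ∈ (Finset.univ : Finset (Fin (m + 2))).powersetCard 3,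
        ∑ i ∈ s, ⟪q i, v⟫ • (∑ j ∈ (s.erase i),
          (∏ k ∈ (s.erase i).erase j, ⟪q k, y⟫) • (innerSL ℝ (q j)))) y := by
  apply HasFDerivAt.fun_sum; intro s _
  apply HasFDerivAt.fun_sum; intro i _
  exact (HasFDerivAt.finset_prod (u := s.erase i)
    (fun j _ => (innerSL ℝ (q j)).hasFDerivAt (x := y))).mul_const ⟪q i, v⟫

/-- The third elementary symmetric polynomial `h(y) = Σ_{i<j<k} ⟨q_i,y⟩⟨q_j,y⟩⟨q_k,y⟩`
in the linear forms associated to the vertices `q₁,…,q_{n+2}` of a regular simplex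
inscribed in `𝕊ⁿ ⊂ ℝ^{n+1}` is harmonic: `Δh = 0`, where the Laplacian is the sum of
the second partial derivatives. -/
theorem stmt1 (n : ℕ) (hn : 1 ≤ n)
    (q : Fin (n + 2) → EuclideanSpace ℝ (Fin (n + 1)))
    (hunit : ∀ i, ‖q i‖ = 1)
    (hsum : ∑ i, q i = 0)
    (hangle : ∀ i j, i ≠ j → ⟪q i, q j⟫ = -1 / (n + 1))
    (h : EuclideanSpace ℝ (Fin (n + 1)) → ℝ)
    (hdef : h = fun y => ∑ s ∈ (Finset.univ : Finset (Fin (n + 2))).powersetCard 3,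
      ∏ i ∈ s, ⟪q i, y⟫) :
    ∀ y, ∑ i, fderiv ℝ (fun z => fderiv ℝ h z (EuclideanSpace.single i 1)) y
        (EuclideanSpace.single i 1) = 0 := by
  intro y
  -- first derivative in any direction v
  have hfd : ∀ v, (fun z => fderiv ℝ h z v)
      = fun z => ∑ s ∈ (Finset.univ : Finset (Fin (n + 2))).powersetCard 3,
          ∑ i ∈ s, (∏ j ∈ s.erase i, ⟪q j, z⟫) * ⟪q i, v⟫ := by
    intro v
    funext z
    rw [hdef, (d1 q z).fderiv]
    simp [ContinuousLinearMap.sum_apply, ContinuousLinearMap.smul_apply]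
  -- second derivative
  have hfd2 : ∀ v w : EuclideanSpace ℝ (Fin (n + 1)),
      fderiv ℝ (fun z => fderiv ℝ h z v) y w
      = ∑ s ∈ (Finset.univ : Finset (Fin (n + 2))).powersetCard 3,
          ∑ i ∈ s, ⟪q i, v⟫ * (∑ j ∈ (s.erase i),
            (∏ k ∈ (s.erase i).erase j, ⟪q k, y⟫) * ⟪q j, w⟫) := by
    intro v w
    rw [hfd v, (d2 q v y).fderiv]
    simp [ContinuousLinearMap.sum_apply, ContinuousLinearMap.smul_apply, smul_eq_mul]
  simp only [hfd2]
  -- push the sum over coordinates inside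
  rw [Finset.sum_comm]
  have key : ∀ s ∈ (Finset.univ : Finset (Fin (n + 2))).powersetCard 3,
      (∑ m : Fin (n+1), ∑ i ∈ s, ⟪q i, EuclideanSpace.single m 1⟫ *
        (∑ j ∈ (s.erase i), (∏ k ∈ (s.erase i).erase j, ⟪q k, y⟫) *
          ⟪q j, EuclideanSpace.single m 1⟫))
      = (-1 / (n + 1)) * (2 * ∑ k ∈ s, ⟪q k, y⟫) := by
    intro s hs
    have hcard : s.card = 3 := (Finset.mem_powersetCard.mp hs).2
    rw [Finset.sum_comm]
    have : ∀ i ∈ s, (∑ m : Fin (n+1), ⟪q i, EuclideanSpace.single m 1⟫ *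
        (∑ j ∈ (s.erase i), (∏ k ∈ (s.erase i).erase j, ⟪q k, y⟫) *
          ⟪q j, EuclideanSpace.single m 1⟫))
        = ∑ j ∈ (s.erase i), (∏ k ∈ (s.erase i).erase j, ⟪q k, y⟫) * (-1 / (n + 1)) := by
      intro i hi
      simp only [Finset.mul_sum, Finset.sum_comm (s := Finset.univ)]
      apply Finset.sum_congr rfl
      intro j hj
      have hij : i ≠ j := (Finset.mem_erase.mp hj).1.symm
      have : ∑ m : Fin (n+1), ⟪q i, EuclideanSpace.single m (1:ℝ)⟫ *
          ((∏ k ∈ (s.erase i).erase j, ⟪q k, y⟫) * ⟪q j, EuclideanSpace.single m 1⟫)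
          = (∏ k ∈ (s.erase i).erase j, ⟪q k, y⟫) * ⟪q i, q j⟫ := by
        simp only [EuclideanSpace.inner_single_right, one_mul, map_one]
        rw [PiLp.inner_apply, Finset.mul_sum]
        apply Finset.sum_congr rfl
        intro m _
        simp only [RCLike.inner_apply, conj_trivial]
        ring
      rw [this, hangle i j hij]
    rw [Finset.sum_congr rfl this]
    simp_rw [← Finset.sum_mul]
    rw [c1 s hcard (fun k => ⟪q k, y⟫)]
    ring
  rw [Finset.sum_congr rfl key, ← Finset.mul_sum]
  -- double counting: Σ_s Σ_{k∈s} f k = C * Σ_k f k = 0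
  have hcount : ∑ s ∈ (Finset.univ : Finset (Fin (n + 2))).powersetCard 3,
      (2 * ∑ k ∈ s, ⟪q k, y⟫) = 0 := by
    rw [← Finset.mul_sum]
    have : ∑ s ∈ (Finset.univ : Finset (Fin (n + 2))).powersetCard 3, ∑ k ∈ s, ⟪q k, y⟫
        = ∑ k : Fin (n+2), (((Finset.univ.powersetCard 3).filter
            (fun s => k ∈ s)).card : ℝ) * ⟪q k, y⟫ := by
      have step1 : ∀ s ∈ (Finset.univ : Finset (Fin (n + 2))).powersetCard 3,
          ∑ k ∈ s, ⟪q k, y⟫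
          = ∑ k : Fin (n+2), (if k ∈ s then ⟪q k, y⟫ else 0) := by
        intro s _
        rw [Finset.sum_ite_mem, Finset.univ_inter]
      rw [Finset.sum_congr rfl step1, Finset.sum_comm]
      apply Finset.sum_congr rfl
      intro k _
      rw [← Finset.sum_filter, Finset.sum_const, nsmul_eq_mul]
    rw [this]
    have hc2 : ∀ k : Fin (n+2), (((Finset.univ.powersetCard 3).filter
        (fun s => k ∈ s)).card : ℝ) = (Nat.choose (n+1) 2 : ℝ) := by
      intro k
      rw [c2 k 2]
      simp [Fintype.card_fin]
    simp_rw [hc2]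
    rw [← Finset.mul_sum, ← sum_inner, hsum]
    simp
  rw [hcount, mul_zero]
end

section
/- Fix n ≥ 1, p < −n−1, γ = (p+n+1)/(n+1) < 0, and a continuous function φ : (0,∞) → [0,∞) with φ(r) → φ_∞ ∈ (0,∞) as r → ∞ and φ(r) = O(r^N) as r → 0 for all N (rapid decay at 0). Define f(r) = [(1+r²)^{(n+1)/2} / rⁿ]^γ · ( ∫₁^r φ(s)/s · [(1+s²)^{(n+1)/2} / sⁿ]^{−γ} ds + β ). If β > ∫₀¹ φ(s)/s · [(1+s²)^{(n+1)/2} / sⁿ]^{−γ} ds, then f(r) > 0 for all r ∈ (0,∞), lim_{r→0⁺} f(r) = 0, and lim_{r→∞} f(r) = φ_∞ / |γ|. -/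
open Set Filter Real MeasureTheory

lemma avg_tendsto (G g ψ : ℝ → ℝ) (a L K : ℝ)
    (hG : ∀ s ∈ Ici a, HasDerivAt G (g s) s)
    (hg_cont : ContinuousOn g (Ici a))
    (hg_nonneg : ∀ s ∈ Ici a, 0 ≤ g s)
    (hψ_cont : ContinuousOn ψ (Ici a))
    (hGtop : Tendsto G atTop atTop)
    (hψ : Tendsto ψ atTop (nhds L)) :
    Tendsto (fun r => (K + ∫ s in a..r, ψ s * g s) / G r) atTop (nhds L) := by
  rw [Metric.tendsto_atTop]
  intro ε hε
  set ε' := ε / 3 with hε'def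
  have hε' : 0 < ε' := by positivity
  obtain ⟨R₀, hR₀⟩ := (Metric.tendsto_atTop.mp hψ) ε' hε'
  set R := max a R₀ with hRdef
  have hRa : a ≤ R := le_max_left _ _
  have hsub : ∀ u v : ℝ, a ≤ u → a ≤ v → uIcc u v ⊆ Ici a :=
    fun u v hu hv x hx => le_trans (le_inf hu hv) hx.1
  have hcontψg : ContinuousOn (fun s => ψ s * g s) (Ici a) := hψ_cont.mul hg_cont
  have hintψg : ∀ u v : ℝ, a ≤ u → a ≤ v →
      IntervalIntegrable (fun s => ψ s * g s) volume u v :=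
    fun u v hu hv => (hcontψg.mono (hsub u v hu hv)).intervalIntegrable
  have hintg : ∀ u v : ℝ, a ≤ u → a ≤ v → IntervalIntegrable g volume u v :=
    fun u v hu hv => (hg_cont.mono (hsub u v hu hv)).intervalIntegrable
  -- FTC
  have hFTC : ∀ r, R ≤ r → (∫ s in R..r, g s) = G r - G R := by
    intro r hr
    exact intervalIntegral.integral_eq_sub_of_hasDerivAt
      (fun x hx => hG x (hsub R r hRa (hRa.trans hr) hx))
      (hintg R r hRa (hRa.trans hr))
  have hGmono : ∀ r, R ≤ r → G R ≤ G r := by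
    intro r hr
    have h1 : 0 ≤ ∫ s in R..r, g s := by
      apply intervalIntegral.integral_nonneg hr
      intro x hx
      exact hg_nonneg x (le_trans (hRa.trans hx.1) le_rfl)
    linarith [hFTC r hr]
  set D := K + (∫ s in a..R, ψ s * g s) - L * G R with hDdef
  set C := |D| + ε' * |G R| with hCdef
  -- eventual largeness of G
  have hev : ∀ᶠ r in atTop, (R ≤ r ∧ max 1 (C / ε') ≤ G r) :=
    (eventually_ge_atTop R).and (hGtop.eventually (eventually_ge_atTop _))
  obtain ⟨M, hM⟩ := eventually_atTop.mp hev
  refine ⟨M, fun r hr => ?_⟩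
  obtain ⟨hrR, hrG⟩ := hM r hr
  have hra : a ≤ r := hRa.trans hrR
  have hGrpos : 0 < G r := lt_of_lt_of_le one_pos (le_trans (le_max_left _ _) hrG)
  -- error term
  set E := ∫ s in R..r, (ψ s - L) * g s with hEdef
  have hEbound : |E| ≤ ε' * (G r - G R) := by
    have h1 : ‖∫ s in R..r, (ψ s - L) * g s‖ ≤ |∫ s in R..r, ε' * g s| := by
      apply intervalIntegral.norm_integral_le_abs_of_norm_le
      · filter_upwards [MeasureTheory.ae_restrict_mem measurableSet_uIoc] with t ht
        have htR : R ≤ t := by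
          rw [Set.uIoc_of_le hrR] at ht
          exact ht.1.le
        have hta : a ≤ t := hRa.trans htR
        have h2 : |ψ t - L| ≤ ε' := by
          have := hR₀ t (le_trans (le_max_right a R₀) htR)
          rw [Real.dist_eq] at this
          exact le_of_lt this
        calc ‖(ψ t - L) * g t‖ = |ψ t - L| * g t := by
              rw [norm_mul, Real.norm_eq_abs, Real.norm_eq_abs,
                abs_of_nonneg (hg_nonneg t hta)]
          _ ≤ ε' * g t := by
              exact mul_le_mul_of_nonneg_right h2 (hg_nonneg t hta)
      · exact (hintg R r hRa hra).const_mul ε'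
    have h2 : (∫ s in R..r, ε' * g s) = ε' * (G r - G R) := by
      rw [intervalIntegral.integral_const_mul, hFTC r hrR]
    rw [h2] at h1
    have h3 : 0 ≤ ε' * (G r - G R) :=
      mul_nonneg hε'.le (by linarith [hGmono r hrR])
    rwa [Real.norm_eq_abs, abs_of_nonneg h3] at h1
  -- decomposition of the integral
  have hsplit : (∫ s in a..r, ψ s * g s)
      = (∫ s in a..R, ψ s * g s) + ∫ s in R..r, ψ s * g s :=
    (intervalIntegral.integral_add_adjacent_intervals
      (hintψg a R le_rfl hRa) (hintψg R r hRa hra)).symm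
  have hmid : (∫ s in R..r, ψ s * g s) = E + L * (G r - G R) := by
    have h1 : (∫ s in R..r, ψ s * g s)
        = (∫ s in R..r, ((ψ s - L) * g s + L * g s)) := by
      apply intervalIntegral.integral_congr
      intro x _; ring
    have h2 : IntervalIntegrable (fun s => (ψ s - L) * g s) volume R r :=
      (((hψ_cont.sub continuousOn_const).mul hg_cont).mono
        (hsub R r hRa hra)).intervalIntegrable
    have h3 : IntervalIntegrable (fun s => L * g s) volume R r :=
      (hintg R r hRa hra).const_mul L
    rw [h1, intervalIntegral.integral_add h2 h3,
      intervalIntegral.integral_const_mul, hFTC r hrR]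
  -- main estimate
  have hnum : K + (∫ s in a..r, ψ s * g s) = D + E + L * G r := by
    rw [hsplit, hmid, hDdef]; ring
  have hdist : (K + (∫ s in a..r, ψ s * g s)) / G r - L = (D + E) / G r := by
    rw [hnum]; field_simp; ring
  rw [Real.dist_eq, hdist]
  have hGrC : C ≤ ε' * G r := by
    have h1 : C / ε' ≤ G r := le_trans (le_max_right _ _) hrG
    calc C = ε' * (C / ε') := by field_simp
      _ ≤ ε' * G r := mul_le_mul_of_nonneg_left h1 hε'.le
  have habs : |D + E| ≤ C + ε' * G r := by
    have h1 : |D + E| ≤ |D| + |E| := abs_add_le _ _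
    have h2 : |E| ≤ ε' * G r + ε' * |G R| := by
      have := hEbound
      nlinarith [neg_abs_le (G R), hε'.le]
    rw [hCdef]; linarith
  calc |(D + E) / G r| = |D + E| / G r := by
        rw [abs_div, abs_of_pos hGrpos]
    _ ≤ 2 * ε' := (div_le_iff₀ hGrpos).mpr (by linarith)
    _ < ε := by rw [hε'def]; linarith

set_option maxHeartbeats 3000000 in
/-- Properties of the explicit solution `f` of the radial ODE: for `p < −n−1`,
`γ = (p+n+1)/(n+1) < 0`, `φ` continuous nonnegative with limit `φ_∞ ∈ (0,∞)` at infinity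
and rapid decay at `0`, and `β > ∫₀¹ φ(s)/s·[(1+s²)^{(n+1)/2}/sⁿ]^{−γ} ds`, the function
`f(r) = [(1+r²)^{(n+1)/2}/rⁿ]^γ (∫₁^r φ(s)/s·[(1+s²)^{(n+1)/2}/sⁿ]^{−γ} ds + β)`
is positive on `(0,∞)`, tends to `0` as `r → 0⁺` and to `φ_∞/|γ|` as `r → ∞`. -/
theorem stmt7 (n : ℕ) (hn : 1 ≤ n) (p : ℝ) (hp : p < -(n + 1 : ℝ))
    (γ : ℝ) (hγ : γ = (p + n + 1) / (n + 1))
    (φ : ℝ → ℝ) (hφcont : ContinuousOn φ (Ioi 0))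
    (hφnonneg : ∀ r ∈ Ioi (0 : ℝ), 0 ≤ φ r)
    (φinf : ℝ) (hφinfpos : 0 < φinf) (hφinf : Tendsto φ atTop (nhds φinf))
    (hdecay : ∀ N : ℕ, ∃ C : ℝ, 0 < C ∧ ∀ r ∈ Ioo (0 : ℝ) 1, φ r ≤ C * r ^ N)
    (β : ℝ)
    (hβ : (∫ s in (0:ℝ)..1,
        φ s / s * (((1 + s ^ 2) ^ ((n + 1 : ℝ) / 2)) / s ^ n) ^ (-γ)) < β)
    (f : ℝ → ℝ)
    (hf : f = fun r => (((1 + r ^ 2) ^ ((n + 1 : ℝ) / 2)) / r ^ n) ^ γ *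
      ((∫ s in (1:ℝ)..r,
        φ s / s * (((1 + s ^ 2) ^ ((n + 1 : ℝ) / 2)) / s ^ n) ^ (-γ)) + β)) :
    (∀ r ∈ Ioi (0 : ℝ), 0 < f r) ∧
    Tendsto f (nhdsWithin 0 (Ioi 0)) (nhds 0) ∧
    Tendsto f atTop (nhds (φinf / |γ|)) := by
  have hγneg : γ < 0 := by
    rw [hγ]
    apply div_neg_of_neg_of_pos
    · linarith
    · positivity
  set F : ℝ → ℝ := fun s =>
    φ s / s * (((1 + s ^ 2) ^ ((n + 1 : ℝ) / 2)) / s ^ n) ^ (-γ) with hFdef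
  set b : ℝ := -γ * ((n + 1 : ℝ) / 2) with hbdef
  set c : ℝ := (n : ℝ) * γ with hcdef
  have hb : 0 < b := by
    rw [hbdef]; apply mul_pos (by linarith); positivity
  have hc : c < 0 := by
    rw [hcdef]
    apply mul_neg_of_pos_of_neg _ hγneg
    exact_mod_cast Nat.pos_of_ne_zero (by omega)
  set G : ℝ → ℝ := fun s => (1 + s ^ 2) ^ b * s ^ c with hGdef
  set g : ℝ → ℝ := fun s =>
    (-γ) * (s ^ 2 - (n : ℝ)) * ((1 + s ^ 2) ^ (b - 1) * s ^ (c - 1)) with hgdef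
  -- G is the (-γ)-power of the kernel
  have hG_eq : ∀ s : ℝ, 0 < s →
      (((1 + s ^ 2) ^ ((n + 1 : ℝ) / 2)) / s ^ n : ℝ) ^ (-γ) = G s := by
    intro s hs
    have h1 : (0:ℝ) < 1 + s ^ 2 := by positivity
    rw [Real.div_rpow (Real.rpow_nonneg h1.le _) (pow_nonneg hs.le n),
      ← Real.rpow_natCast s n, ← Real.rpow_mul h1.le, ← Real.rpow_mul hs.le,
      show (n : ℝ) * -γ = -c by rw [hcdef]; ring,
      Real.rpow_neg hs.le, div_eq_mul_inv, inv_inv, hGdef]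
    congr 2
    rw [hbdef]; ring
  have hFeq : ∀ s : ℝ, 0 < s → F s = φ s / s * G s := by
    intro s hs
    simp only [hFdef]
    rw [hG_eq s hs]
  have hGpos : ∀ s : ℝ, 0 < s → 0 < G s := by
    intro s hs
    exact mul_pos (Real.rpow_pos_of_pos (by positivity) _)
      (Real.rpow_pos_of_pos hs _)
  have hhpos : ∀ s : ℝ, 0 < s →
      (0:ℝ) < ((1 + s ^ 2) ^ ((n + 1 : ℝ) / 2)) / s ^ n := by
    intro s hs
    exact div_pos (Real.rpow_pos_of_pos (by positivity) _) (pow_pos hs n)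
  have hFnonneg : ∀ s : ℝ, 0 < s → 0 ≤ F s := by
    intro s hs
    simp only [hFdef]
    exact mul_nonneg (div_nonneg (hφnonneg s hs) hs.le)
      (Real.rpow_nonneg (hhpos s hs).le _)
  have hFcont : ContinuousOn F (Ioi 0) := by
    rw [hFdef]
    apply ContinuousOn.mul
    · exact hφcont.div continuousOn_id (fun x hx => ne_of_gt hx)
    · apply ContinuousOn.rpow_const
      · apply ContinuousOn.div
        · apply ContinuousOn.rpow_const (by fun_prop)
          intro x _; left; positivity
        · fun_prop
        · intro x hx; exact pow_ne_zero n (ne_of_gt hx)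
      · intro x hx; left; exact ne_of_gt (hhpos x hx)
  -- bound near 0
  set N : ℕ := ⌈(1:ℝ) - c⌉₊ with hNdef
  obtain ⟨C₀, hC₀pos, hC₀⟩ := hdecay N
  set M : ℝ := C₀ * 2 ^ b with hMdef
  have hMpos : 0 < M := mul_pos hC₀pos (Real.rpow_pos_of_pos two_pos _)
  have hFbound : ∀ s ∈ Ioo (0:ℝ) 1, F s ≤ M := by
    intro s hs
    obtain ⟨hs0, hs1⟩ := hs
    have hNc : 0 ≤ (N : ℝ) - 1 + c := by
      have := Nat.le_ceil ((1:ℝ) - c)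
      rw [hNdef]; push_cast at this ⊢; linarith
    calc F s = (φ s / s) * ((1 + s ^ 2) ^ b * s ^ c) := hFeq s hs0
      _ ≤ (C₀ * s ^ N / s) * ((1 + s ^ 2) ^ b * s ^ c) := by
          gcongr
          exact hC₀ s ⟨hs0, hs1⟩
      _ = C₀ * ((1 + s ^ 2) ^ b * s ^ ((N : ℝ) - 1 + c)) := by
          rw [Real.rpow_add hs0, Real.rpow_sub hs0, Real.rpow_one,
            Real.rpow_natCast]
          field_simp
      _ ≤ C₀ * (2 ^ b * 1) := by
          apply mul_le_mul_of_nonneg_left _ hC₀pos.le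
          apply mul_le_mul
          · exact Real.rpow_le_rpow (by positivity) (by nlinarith) hb.le
          · exact Real.rpow_le_one hs0.le hs1.le hNc
          · exact Real.rpow_nonneg hs0.le _
          · exact Real.rpow_nonneg (by norm_num) _
      _ = M := by rw [hMdef, mul_one]
  -- integrability on (0,1]
  have hInt01 : IntegrableOn F (Ioc 0 1) volume := by
    refine MeasureTheory.IntegrableOn.congr_set_ae ?_
      (MeasureTheory.Ioo_ae_eq_Ioc (a := (0:ℝ)) (b := 1)).symm
    have hmeas : AEStronglyMeasurable F (volume.restrict (Ioo (0:ℝ) 1)) :=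
      (hFcont.mono (fun x hx => hx.1)).aestronglyMeasurable measurableSet_Ioo
    apply MeasureTheory.Integrable.mono' (g := fun _ => M)
      (integrable_const M) hmeas
    filter_upwards [MeasureTheory.ae_restrict_mem measurableSet_Ioo] with x hx
    rw [Real.norm_eq_abs, abs_of_nonneg (hFnonneg x hx.1)]
    exact hFbound x hx
  have hIntF : ∀ r : ℝ, 0 < r → IntervalIntegrable F volume 0 r := by
    intro r hr
    rw [intervalIntegrable_iff_integrableOn_Ioc_of_le hr.le]
    rcases le_or_gt r 1 with h | h
    · exact hInt01.mono_set (Ioc_subset_Ioc le_rfl h)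
    · rw [← Ioc_union_Ioc_eq_Ioc (le_of_lt one_pos) h.le]
      apply hInt01.union
      apply IntegrableOn.mono_set _ Ioc_subset_Icc_self
      apply ContinuousOn.integrableOn_Icc
      apply hFcont.mono
      intro x hx
      exact lt_of_lt_of_le one_pos hx.1
  set J : ℝ → ℝ := fun r => ∫ s in (0:ℝ)..r, F s with hJdef
  have hβ' : J 1 < β := hβ
  have hJnonneg : ∀ r : ℝ, 0 < r → 0 ≤ J r := by
    intro r hr
    rw [hJdef]
    simp only
    rw [intervalIntegral.integral_of_le hr.le]
    exact MeasureTheory.setIntegral_nonneg measurableSet_Ioc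
      (fun x hx => hFnonneg x hx.1)
  -- the clean formula for f
  have hfr : ∀ r : ℝ, 0 < r → f r =
      (((1 + r ^ 2) ^ ((n + 1 : ℝ) / 2)) / r ^ n) ^ γ * (J r + (β - J 1)) := by
    intro r hr
    rw [hf]
    simp only
    have h1 : (∫ s in (1:ℝ)..r, F s) = J r - J 1 :=
      (intervalIntegral.integral_interval_sub_left (hIntF r hr)
        (hIntF 1 one_pos)).symm
    rw [h1]
    ring_nf
  -- Part 1 : positivity
  have part1 : ∀ r ∈ Ioi (0 : ℝ), 0 < f r := by
    intro r hr
    rw [hfr r hr]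
    apply mul_pos (Real.rpow_pos_of_pos (hhpos r hr) _)
    have := hJnonneg r hr
    linarith
  -- Part 2 : limit at 0
  have hJ0 : Tendsto J (nhdsWithin 0 (Ioi 0)) (nhds 0) := by
    apply squeeze_zero'
    · filter_upwards [self_mem_nhdsWithin] with r hr
      exact hJnonneg r hr
    · filter_upwards [Ioo_mem_nhdsGT_of_mem
        (⟨le_refl (0:ℝ), one_pos⟩ : (0:ℝ) ∈ Ico (0:ℝ) 1)] with r hr
      have hr0 : (0:ℝ) < r := hr.1
      have h1 : J r ≤ M * r := by
        rw [hJdef]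
        simp only
        rw [intervalIntegral.integral_of_le hr0.le]
        calc (∫ s in Ioc (0:ℝ) r, F s) ≤ ∫ _ in Ioc (0:ℝ) r, M := by
              apply MeasureTheory.setIntegral_mono_on
                (hInt01.mono_set (Ioc_subset_Ioc le_rfl hr.2.le))
                (integrableOn_const measure_Ioc_lt_top.ne)
                measurableSet_Ioc
              intro x hx
              exact hFbound x ⟨hx.1, lt_of_le_of_lt hx.2 hr.2⟩
          _ = M * r := by
              rw [MeasureTheory.setIntegral_const]
              simp [Real.volume_Ioc, ENNReal.toReal_ofReal hr0.le, mul_comm, hr0.le]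
      exact h1
    · have : Tendsto (fun r : ℝ => M * r) (nhds 0) (nhds 0) := by
        simpa using (continuous_mul_left M).tendsto (0:ℝ)
      exact this.mono_left nhdsWithin_le_nhds
  have hh_top : Tendsto (fun r : ℝ => ((1 + r ^ 2) ^ ((n + 1 : ℝ) / 2)) / r ^ n)
      (nhdsWithin 0 (Ioi 0)) atTop := by
    have hpow : Tendsto (fun r : ℝ => r ^ n) (nhdsWithin 0 (Ioi 0))
        (nhdsWithin 0 (Ioi 0)) := by
      apply tendsto_nhdsWithin_of_tendsto_nhds_of_eventually_within
      · have : Tendsto (fun r : ℝ => r ^ n) (nhds 0) (nhds 0) := by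
          have := (continuous_pow n (M := ℝ)).tendsto 0
          simpa [zero_pow (by omega : n ≠ 0)] using this
        exact this.mono_left nhdsWithin_le_nhds
      · filter_upwards [self_mem_nhdsWithin] with r hr
        exact pow_pos (mem_Ioi.mp hr) n
    have hinv : Tendsto (fun r : ℝ => (r ^ n)⁻¹) (nhdsWithin 0 (Ioi 0)) atTop :=
      hpow.inv_tendsto_nhdsGT_zero
    apply tendsto_atTop_mono' _ _ hinv
    filter_upwards [self_mem_nhdsWithin] with r hr
    have hrn : (0:ℝ) < r ^ n := pow_pos hr n
    have h1 : (1:ℝ) ≤ (1 + r ^ 2) ^ ((n + 1 : ℝ) / 2) :=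
      Real.one_le_rpow (by nlinarith) (by positivity)
    rw [inv_eq_one_div]
    gcongr
  have hrpowγ : Tendsto (fun x : ℝ => x ^ γ) atTop (nhds 0) := by
    have := tendsto_rpow_neg_atTop (y := -γ) (by linarith)
    simpa using this
  have part2 : Tendsto f (nhdsWithin 0 (Ioi 0)) (nhds 0) := by
    have h1 : Tendsto (fun r : ℝ =>
        (((1 + r ^ 2) ^ ((n + 1 : ℝ) / 2)) / r ^ n) ^ γ * (J r + (β - J 1)))
        (nhdsWithin 0 (Ioi 0)) (nhds 0) := by
      have h2 := (hrpowγ.comp hh_top).mul (hJ0.add (tendsto_const_nhds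
        (x := β - J 1)))
      simpa using h2
    apply h1.congr'
    filter_upwards [self_mem_nhdsWithin] with r hr
    exact (hfr r hr).symm
  -- Part 3 : limit at infinity
  set a : ℝ := (n : ℝ) + 1 with hadef
  have hn1 : (1:ℝ) ≤ (n : ℝ) := by exact_mod_cast hn
  have ha1 : (1:ℝ) ≤ a := by rw [hadef]; linarith
  have ha0 : (0:ℝ) < a := lt_of_lt_of_le one_pos ha1
  have hasq : ∀ s : ℝ, a ≤ s → (n : ℝ) < s ^ 2 := by
    intro s hs
    have hna : (n : ℝ) + 1 ≤ s := by rw [hadef] at hs; exact hs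
    nlinarith [Nat.cast_nonneg (α := ℝ) n]
  have haIoi : Ici a ⊆ Ioi (0:ℝ) := fun x hx => lt_of_lt_of_le ha0 hx
  set ψ : ℝ → ℝ := fun s =>
    φ s * ((1 + s ^ 2) / ((-γ) * (s ^ 2 - (n : ℝ)))) with hψdef
  -- derivative of G
  have hG_deriv : ∀ s ∈ Ici a, HasDerivAt G (g s) s := by
    intro s hs
    have hs0 : (0:ℝ) < s := haIoi hs
    have h1p : (0:ℝ) < 1 + s ^ 2 := by positivity
    have h1 : HasDerivAt (fun y : ℝ => 1 + y ^ 2) (2 * s) s := by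
      simpa using (hasDerivAt_pow 2 s).const_add 1
    have h2 : HasDerivAt (fun y : ℝ => (1 + y ^ 2) ^ b)
        (2 * s * b * (1 + s ^ 2) ^ (b - 1)) s :=
      h1.rpow_const (Or.inl h1p.ne')
    have h3 : HasDerivAt (fun y : ℝ => y ^ c) (c * s ^ (c - 1)) s :=
      Real.hasDerivAt_rpow_const (Or.inl hs0.ne')
    have h4 := h2.mul h3
    rw [hGdef]
    refine h4.congr_deriv ?_
    have e1 : (1 + s ^ 2) ^ b = (1 + s ^ 2) ^ (b - 1) * (1 + s ^ 2) := by
      rw [← Real.rpow_add_one h1p.ne' (b - 1), sub_add_cancel]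
    have e2 : s ^ c = s ^ (c - 1) * s := by
      rw [← Real.rpow_add_one hs0.ne' (c - 1), sub_add_cancel]
    rw [hgdef]
    simp only
    rw [e1, e2, hbdef, hcdef]
    ring
  have hg_cont : ContinuousOn g (Ici a) := by
    rw [hgdef]
    apply ContinuousOn.mul (by fun_prop)
    apply ContinuousOn.mul
    · apply ContinuousOn.rpow_const (by fun_prop)
      intro x _; left; positivity
    · apply ContinuousOn.rpow_const continuousOn_id
      intro x hx; left; exact ne_of_gt (haIoi hx)
  have hg_nonneg : ∀ s ∈ Ici a, 0 ≤ g s := by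
    intro s hs
    have hs0 : (0:ℝ) < s := haIoi hs
    rw [hgdef]
    apply mul_nonneg (mul_nonneg (by linarith) (by nlinarith [hasq s hs]))
    exact mul_nonneg (Real.rpow_nonneg (by positivity) _)
      (Real.rpow_nonneg hs0.le _)
  have hψ_cont : ContinuousOn ψ (Ici a) := by
    rw [hψdef]
    apply ContinuousOn.mul (hφcont.mono haIoi)
    apply ContinuousOn.div (by fun_prop) (by fun_prop)
    intro x hx
    have := hasq x hx
    have h2 : x ^ 2 - (n:ℝ) > 0 := by linarith
    exact ne_of_gt (mul_pos (by linarith) h2)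
  have hGtop : Tendsto G atTop atTop := by
    apply tendsto_atTop_mono' atTop _ (tendsto_rpow_atTop (y := -γ) (by linarith))
    filter_upwards [eventually_ge_atTop (1:ℝ)] with r hr
    have hr0 : (0:ℝ) < r := lt_of_lt_of_le one_pos hr
    have h1 : r ^ (-γ) = r ^ (2 * b) * r ^ c := by
      rw [← Real.rpow_add hr0]
      congr 1
      rw [hbdef, hcdef]; ring
    have h2 : r ^ (2 * b) = (r ^ 2) ^ b := by
      rw [← Real.rpow_natCast r 2, ← Real.rpow_mul hr0.le]
      norm_num
    have h3 : ((r ^ 2 : ℝ)) ^ b ≤ (1 + r ^ 2) ^ b :=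
      Real.rpow_le_rpow (by positivity) (by linarith) hb.le
    calc r ^ (-γ) = (r ^ 2) ^ b * r ^ c := by rw [h1, h2]
      _ ≤ (1 + r ^ 2) ^ b * r ^ c :=
          mul_le_mul_of_nonneg_right h3 (Real.rpow_nonneg hr0.le _)
      _ = G r := by rw [hGdef]
  have hψlim : Tendsto ψ atTop (nhds (φinf * (-γ)⁻¹)) := by
    have hq : Tendsto (fun s : ℝ => (1 + s ^ 2) / ((-γ) * (s ^ 2 - (n:ℝ))))
        atTop (nhds ((-γ)⁻¹)) := by
      have hx2 : Tendsto (fun s : ℝ => (s ^ 2)⁻¹) atTop (nhds 0) :=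
        (tendsto_pow_atTop two_ne_zero).inv_tendsto_atTop
      have hnum : Tendsto (fun s : ℝ => (s ^ 2)⁻¹ + 1) atTop (nhds 1) := by
        simpa using hx2.add (tendsto_const_nhds (x := (1:ℝ)))
      have hden : Tendsto (fun s : ℝ => (-γ) * (1 - (n:ℝ) * (s ^ 2)⁻¹))
          atTop (nhds (-γ)) := by
        have h3 : Tendsto (fun s : ℝ => 1 - (n:ℝ) * (s ^ 2)⁻¹) atTop
            (nhds 1) := by
          simpa using (tendsto_const_nhds (x := (1:ℝ))).sub
            ((tendsto_const_nhds (x := (n:ℝ))).mul hx2)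
        simpa using (tendsto_const_nhds (x := -γ)).mul h3
      have h4 := hnum.div hden (by linarith)
      have h5 : (1 : ℝ) / (-γ) = (-γ)⁻¹ := one_div _
      rw [h5] at h4
      apply h4.congr'
      filter_upwards [eventually_ge_atTop a] with s hs
      have hs0 : (0:ℝ) < s := lt_of_lt_of_le ha0 hs
      have h6 := hasq s hs
      have h7 : s ^ 2 - (n:ℝ) ≠ 0 := by linarith
      rw [Pi.div_apply]
      field_simp
    have := hφinf.mul hq
    rw [hψdef]
    exact this
  have hFψg : ∀ s : ℝ, a ≤ s → F s = ψ s * g s := by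
    intro s hs
    have hs0 : (0:ℝ) < s := lt_of_lt_of_le ha0 hs
    have h1p : (0:ℝ) < 1 + s ^ 2 := by positivity
    have h6 := hasq s hs
    have h7 : s ^ 2 - (n:ℝ) ≠ 0 := by linarith
    have e1 : (1 + s ^ 2) ^ b = (1 + s ^ 2) ^ (b - 1) * (1 + s ^ 2) := by
      rw [← Real.rpow_add_one h1p.ne' (b - 1), sub_add_cancel]
    have e2 : s ^ c = s ^ (c - 1) * s := by
      rw [← Real.rpow_add_one hs0.ne' (c - 1), sub_add_cancel]
    have hγ0 : γ ≠ 0 := ne_of_lt hγneg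
    have hD : s ^ 2 * γ - γ * (n:ℝ) ≠ 0 := by
      intro hcon
      apply h7
      have : γ * (s ^ 2 - (n:ℝ)) = 0 := by linarith [hcon]
      rcases mul_eq_zero.mp this with h | h
      · exact absurd h hγ0
      · linarith
    rw [hFeq s hs0, hGdef, hψdef, hgdef]
    simp only
    rw [e1, e2]
    field_simp
  set K : ℝ := J a + (β - J 1) with hKdef
  have hkey : ∀ r : ℝ, a ≤ r → f r = (K + ∫ s in a..r, ψ s * g s) / G r := by
    intro r hr
    have hr0 : (0:ℝ) < r := lt_of_lt_of_le ha0 hr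
    have hsub1 : uIcc a r ⊆ Ioi (0:ℝ) := by
      rw [uIcc_of_le hr]
      exact fun x hx => lt_of_lt_of_le ha0 hx.1
    have hintar : IntervalIntegrable F volume a r :=
      (hFcont.mono hsub1).intervalIntegrable
    have hJsplit : J r = J a + ∫ s in a..r, F s :=
      (intervalIntegral.integral_add_adjacent_intervals (hIntF a ha0) hintar).symm
    have hcongr : (∫ s in a..r, F s) = ∫ s in a..r, ψ s * g s := by
      apply intervalIntegral.integral_congr
      intro x hx
      rw [uIcc_of_le hr] at hx
      exact hFψg x hx.1
    have hpow : (((1 + r ^ 2) ^ ((n + 1 : ℝ) / 2)) / r ^ n : ℝ) ^ γ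
        = (G r)⁻¹ := by
      rw [← hG_eq r hr0,
        ← Real.rpow_neg (le_of_lt (hhpos r hr0)) (-γ), neg_neg]
    rw [hfr r hr0, hpow, hJsplit, hcongr, hKdef]
    rw [inv_mul_eq_div]
    congr 1
    ring
  have part3 : Tendsto f atTop (nhds (φinf / |γ|)) := by
    have habs : φinf / |γ| = φinf * (-γ)⁻¹ := by
      rw [abs_of_neg hγneg, div_eq_mul_inv]
    rw [habs]
    have havg := avg_tendsto G g ψ a (φinf * (-γ)⁻¹) K hG_deriv hg_cont
      hg_nonneg hψ_cont hGtop hψlim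
    apply havg.congr'
    filter_upwards [eventually_ge_atTop a] with r hr
    exact (hkey r hr).symm
  exact ⟨part1, part2, part3⟩
end

section
/- Let n ≥ 1, p < 0, and let u : 𝕊ⁿ → (0,∞) be continuous, invariant under the symmetry group of a fixed regular simplex with vertices q₁,…,q_{n+2} ∈ 𝕊ⁿ, convex in the sense of being a support function, and satisfy ∫_{𝕊ⁿ} u^p = |𝕊ⁿ|. Then there is a constant C = C(n,p) (independent of u) such that u(x) ≤ C for all x ∈ 𝕊ⁿ. -/
open MeasureTheory Metric Finset
open scoped RealInnerProductSpace

lemma cheb_mono {N : ℕ} (hN : 1 ≤ N) (c d : Fin N → ℝ) (hc : Monotone c) (hd : Monotone d)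
    (hc0 : ∑ i, c i = 0) (hd0 : ∑ i, d i = 0)
    (hc2 : 1 ≤ ∑ i, (c i) ^ 2) (hd2 : 1 ≤ ∑ i, (d i) ^ 2) :
    1 / (2 * (N : ℝ) ^ 4) ≤ ∑ i, c i * d i := by
  obtain ⟨m, rfl⟩ : ∃ m, N = m + 1 := ⟨N - 1, by omega⟩
  set L := Fin.last m with hL
  set A : ℝ := ((m + 1 : ℕ) : ℝ) with hA'
  have hA : 1 ≤ A := by rw [hA']; exact_mod_cast hN
  have hApos : 0 < A := lt_of_lt_of_le one_pos hA
  have key : ∀ (c : Fin (m+1) → ℝ), Monotone c → ∑ i, c i = 0 →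
      1 ≤ ∑ i, (c i) ^ 2 → 0 ≤ c L ∧ 1 ≤ c L * A ^ 2 := by
    intro c hc hc0 hc2
    have hcle : ∀ i, c i ≤ c L := fun i => hc (Fin.le_last i)
    have ha0 : 0 ≤ c L := by
      by_contra h
      push_neg at h
      have : ∑ i, c i < ∑ i : Fin (m+1), (0:ℝ) :=
        Finset.sum_lt_sum_of_nonempty ⟨L, mem_univ L⟩ (fun i _ => lt_of_le_of_lt (hcle i) h)
      simp [hc0] at this
    refine ⟨ha0, ?_⟩
    have habs : ∀ i, |c i| ≤ A * c L := by
      intro i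
      rw [abs_le]
      constructor
      · have h2 : ∑ j ∈ univ.erase i, c j = -c i := by
          have h := Finset.add_sum_erase univ c (mem_univ i)
          rw [hc0] at h
          linarith
        have h1 : ∑ j ∈ univ.erase i, c j ≤ ∑ _j ∈ univ.erase i, c L :=
          Finset.sum_le_sum fun j _ => hcle j
        rw [h2, Finset.sum_const, nsmul_eq_mul] at h1
        have hcard : ((univ.erase i).card : ℝ) ≤ A := by
          rw [hA']
          have h := Finset.card_le_univ (univ.erase i)
          simp only [Fintype.card_fin] at h
          exact_mod_cast h
        nlinarith [mul_le_mul_of_nonneg_right hcard ha0]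
      · calc c i ≤ c L := hcle i
          _ ≤ A * c L := le_mul_of_one_le_left ha0 hA
    have h1 : ∀ i, (c i) ^ 2 ≤ (A * c L) ^ 2 := by
      intro i
      have := habs i
      nlinarith [abs_nonneg (c i), sq_abs (c i)]
    have h2 : (1:ℝ) ≤ A * (A * c L) ^ 2 := by
      have := le_trans hc2 (Finset.sum_le_sum fun i _ => h1 i)
      rw [Finset.sum_const, Finset.card_univ, Fintype.card_fin, nsmul_eq_mul] at this
      exact le_trans this (le_of_eq rfl)
    -- 1 ≤ A^3 (cL)^2 and want 1 ≤ cL A^2; if cL A^2 < 1 then cL < 1/A^2 and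
    nlinarith [mul_le_mul_of_nonneg_left h2 hApos.le,
      mul_nonneg ha0 (by positivity : (0:ℝ) ≤ A ^ 2), hA]
  obtain ⟨ha0, ha⟩ := key c hc hc0 hc2
  obtain ⟨hb0, hb⟩ := key d hd hd0 hd2
  have hpair : ∀ i j, 0 ≤ (c i - c j) * (d i - d j) := by
    intro i j
    rcases le_total i j with h | h
    · have h1 := hc h; have h2 := hd h; nlinarith
    · have h1 := hc h; have h2 := hd h; nlinarith
  set T := ∑ i, c i * d i with hT
  have inner_sum : ∀ i, ∑ j, (c i - c j) * (d i - d j) = A * (c i * d i) + T := by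
    intro i
    have e : ∀ j, (c i - c j) * (d i - d j)
        = c i * d i - c i * d j - c j * d i + c j * d j := fun j => by ring
    simp_rw [e, Finset.sum_add_distrib, Finset.sum_sub_distrib, ← Finset.mul_sum,
      ← Finset.sum_mul, hc0, hd0, Finset.sum_const, Finset.card_univ, Fintype.card_fin,
      nsmul_eq_mul]
    rw [← hA', ← hT]
    ring
  have hdouble : 2 * A * T = ∑ i, ∑ j, (c i - c j) * (d i - d j) := by
    simp_rw [inner_sum, Finset.sum_add_distrib, ← Finset.mul_sum, Finset.sum_const,
      Finset.card_univ, Fintype.card_fin, nsmul_eq_mul]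
    rw [← hA', ← hT]
    ring
  have hsingle : A * (c L * d L) + T ≤ 2 * A * T := by
    rw [hdouble, ← inner_sum L]
    exact Finset.single_le_sum (f := fun i => ∑ j, (c i - c j) * (d i - d j))
      (fun i _ => Finset.sum_nonneg fun j _ => hpair i j) (mem_univ L)
  rw [div_le_iff₀ (by positivity)]
  have hab : 1 ≤ c L * d L * A ^ 4 := by nlinarith [mul_le_mul ha hb (by positivity) (by nlinarith)]
  have hT0 : 0 ≤ T := by nlinarith [mul_nonneg (mul_nonneg hApos.le ha0) hb0]
  nlinarith [mul_le_mul_of_nonneg_left hsingle (by positivity : (0:ℝ) ≤ A ^ 3), hab, hT0, hApos, hA]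

lemma rearrange {N : ℕ} (hN : 1 ≤ N) (c d : Fin N → ℝ)
    (hc0 : ∑ i, c i = 0) (hd0 : ∑ i, d i = 0)
    (hc2 : 1 ≤ ∑ i, (c i) ^ 2) (hd2 : 1 ≤ ∑ i, (d i) ^ 2) :
    ∃ σ : Equiv.Perm (Fin N), 1 / (2 * (N : ℝ) ^ 4) ≤ ∑ i, c i * d (σ i) := by
  set sc := Tuple.sort c with hsc
  set sd := Tuple.sort d with hsd
  refine ⟨sc.symm.trans sd, ?_⟩
  have hre : ∑ i, c i * d ((sc.symm.trans sd) i) = ∑ i, (c ∘ sc) i * (d ∘ sd) i := by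
    rw [← Equiv.sum_comp sc (fun i => c i * d ((sc.symm.trans sd) i))]
    simp [Function.comp]
  rw [hre]
  refine cheb_mono hN (c ∘ sc) (d ∘ sd) (Tuple.monotone_sort c) (Tuple.monotone_sort d) ?_ ?_ ?_ ?_
  · rw [show ∑ i, (c ∘ sc) i = ∑ i, c i from Equiv.sum_comp sc c]; exact hc0
  · rw [show ∑ i, (d ∘ sd) i = ∑ i, d i from Equiv.sum_comp sd d]; exact hd0
  · rw [show ∑ i, ((c ∘ sc) i)^2 = ∑ i, (c i)^2 from Equiv.sum_comp sc (fun j => (c j)^2)]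
    exact hc2
  · rw [show ∑ i, ((d ∘ sd) i)^2 = ∑ i, (d i)^2 from Equiv.sum_comp sd (fun j => (d j)^2)]
    exact hd2

section Simplex

variable {n : ℕ} (q : Fin (n + 2) → EuclideanSpace ℝ (Fin (n + 1)))

lemma simplex_gram (hq1 : ∀ i, ‖q i‖ = 1)
    (hqij : ∀ i j, i ≠ j → ⟪q i, q j⟫ = -1 / (n + 1)) (i j : Fin (n + 2)) :
    ⟪q i, q j⟫ = if i = j then (1 : ℝ) else -1 / (n + 1) := by
  rcases eq_or_ne i j with rfl | h
  · rw [if_pos rfl, real_inner_self_eq_norm_sq, hq1 i]; norm_num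
  · rw [if_neg h]; exact hqij i j h

lemma simplex_span (hq1 : ∀ i, ‖q i‖ = 1)
    (hqij : ∀ i j, i ≠ j → ⟪q i, q j⟫ = -1 / (n + 1)) :
    Submodule.span ℝ (Set.range q) = ⊤ := by
  have hgram := simplex_gram q hq1 hqij
  set v : Fin (n + 1) → EuclideanSpace ℝ (Fin (n + 1)) := fun i => q i.castSucc with hv
  have hli : LinearIndependent ℝ v := by
    rw [Fintype.linearIndependent_iff]
    intro a ha
    have hinner : ∀ j : Fin (n + 1), ⟪∑ i, a i • v i, v j⟫ = 0 := by
      intro j; rw [ha, inner_zero_left]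
    have key : ∀ j : Fin (n + 1), a j * ((n : ℝ) + 2) = ∑ i, a i := by
      intro j
      have h := hinner j
      rw [sum_inner] at h
      have e : ∀ i : Fin (n + 1), ⟪a i • v i, v j⟫
          = a i * (-1 / ((n : ℝ) + 1)) + (if i = j then a i * (((n : ℝ) + 2) / ((n : ℝ) + 1)) else 0) := by
        intro i
        rw [real_inner_smul_left, hv]
        simp only
        rw [hgram i.castSucc j.castSucc]
        rcases eq_or_ne i j with rfl | hij
        · simp only [if_pos rfl, eq_self_iff_true, if_true]
          have hne : ((n : ℝ) + 1) ≠ 0 := by positivity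
          field_simp
          ring
        · rw [if_neg (by simpa using hij), if_neg hij]
          ring
      rw [Finset.sum_congr rfl (fun i _ => e i)] at h
      rw [Finset.sum_add_distrib, Finset.sum_ite_eq' univ j
        (fun i => a i * (((n : ℝ) + 2) / ((n : ℝ) + 1))), if_pos (mem_univ j),
        ← Finset.sum_mul] at h
      have hne : ((n : ℝ) + 1) ≠ 0 := by positivity
      have h3 : ((∑ i, a i) * (-1) + a j * ((n : ℝ) + 2)) / ((n : ℝ) + 1) = 0 := by
        rw [← h]; ring
      have h4 := (div_eq_zero_iff.mp h3).resolve_right hne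
      linarith
    have hsum : ∑ i, a i = 0 := by
      have h := Finset.sum_congr rfl (fun j (_ : j ∈ (univ : Finset (Fin (n+1)))) => key j)
      rw [← Finset.sum_mul] at h
      have hcard : ∑ _j : Fin (n + 1), (∑ i, a i) = ((n : ℝ) + 1) * ∑ i, a i := by
        rw [Finset.sum_const, Finset.card_univ, Fintype.card_fin, nsmul_eq_mul]
        push_cast; ring
      rw [hcard] at h
      nlinarith [h]
    intro i
    have := key i
    rw [hsum] at this
    have hne : ((n : ℝ) + 2) ≠ 0 := by positivity
    exact by nlinarith [this]
  have htop : Submodule.span ℝ (Set.range v) = ⊤ :=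
    hli.span_eq_top_of_card_eq_finrank (by simp)
  rw [eq_top_iff, ← htop]
  apply Submodule.span_mono
  rintro _ ⟨i, rfl⟩
  exact ⟨i.castSucc, rfl⟩

lemma simplex_expansion (hq1 : ∀ i, ‖q i‖ = 1) (hq0 : ∑ i, q i = 0)
    (hqij : ∀ i j, i ≠ j → ⟪q i, q j⟫ = -1 / (n + 1)) (y : EuclideanSpace ℝ (Fin (n + 1))) :
    (((n : ℝ) + 1) / ((n : ℝ) + 2)) • ∑ i, ⟪q i, y⟫ • q i = y := by
  have hgram := simplex_gram q hq1 hqij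
  set w : EuclideanSpace ℝ (Fin (n + 1)) := (((n : ℝ) + 1) / ((n : ℝ) + 2)) • ∑ i, ⟪q i, y⟫ • q i with hw
  have hqsum : ∀ z : EuclideanSpace ℝ (Fin (n + 1)), ∑ i, ⟪q i, z⟫ = 0 := by
    intro z
    rw [← sum_inner, hq0, inner_zero_left]
  have horth : ∀ j, ⟪q j, w - y⟫ = 0 := by
    intro j
    rw [inner_sub_right, hw, real_inner_smul_right, inner_sum]
    have e : ∀ i, ⟪q j, ⟪q i, y⟫ • q i⟫
        = ⟪q i, y⟫ * (-1 / ((n : ℝ) + 1)) + (if i = j then ⟪q i, y⟫ * (((n : ℝ) + 2) / ((n : ℝ) + 1)) else 0) := by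
      intro i
      rw [real_inner_smul_right, hgram j i]
      rcases eq_or_ne i j with rfl | hij
      · rw [if_pos rfl, if_pos rfl]
        have hne : ((n : ℝ) + 1) ≠ 0 := by positivity
        field_simp
        ring
      · rw [if_neg (fun h => hij h.symm), if_neg hij]
        ring
    rw [Finset.sum_congr rfl (fun i _ => e i), Finset.sum_add_distrib,
      Finset.sum_ite_eq' univ j (fun i => ⟪q i, y⟫ * (((n : ℝ) + 2) / ((n : ℝ) + 1))),
      if_pos (mem_univ j), ← Finset.sum_mul, hqsum y]
    have hne1 : ((n : ℝ) + 1) ≠ 0 := by positivity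
    have hne2 : ((n : ℝ) + 2) ≠ 0 := by positivity
    field_simp
    ring
  have hspan := simplex_span q hq1 hqij
  have hzero : ∀ z : EuclideanSpace ℝ (Fin (n + 1)), ⟪z, w - y⟫ = 0 := by
    intro z
    have hz : z ∈ Submodule.span ℝ (Set.range q) := by rw [hspan]; trivial
    induction hz using Submodule.span_induction with
    | mem x hx => obtain ⟨i, rfl⟩ := hx; exact horth i
    | zero => rw [inner_zero_left]
    | add x y' _ _ hx hy => rw [inner_add_left, hx, hy]; ring
    | smul a x _ hx => rw [real_inner_smul_left, hx]; ring
  have : w - y = 0 := by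
    have := hzero (w - y)
    rwa [inner_self_eq_zero] at this
  exact sub_eq_zero.mp this

lemma simplex_isometry (hq1 : ∀ i, ‖q i‖ = 1) (hq0 : ∑ i, q i = 0)
    (hqij : ∀ i j, i ≠ j → ⟪q i, q j⟫ = -1 / (n + 1)) (σ : Equiv.Perm (Fin (n + 2))) :
    ∃ φ : EuclideanSpace ℝ (Fin (n + 1)) ≃ₗᵢ[ℝ] EuclideanSpace ℝ (Fin (n + 1)),
      ∀ i, φ (q i) = q (σ i) := by
  have hgram := simplex_gram q hq1 hqij
  set k : ℝ := ((n : ℝ) + 1) / ((n : ℝ) + 2) with hk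
  have hne1 : ((n : ℝ) + 1) ≠ 0 := by positivity
  have hne2 : ((n : ℝ) + 2) ≠ 0 := by positivity
  set f : EuclideanSpace ℝ (Fin (n + 1)) →ₗ[ℝ] EuclideanSpace ℝ (Fin (n + 1)) :=
    k • ∑ i, ((innerₛₗ ℝ (q i)).smulRight (q (σ i))) with hfdef
  have hf : ∀ y, f y = k • ∑ i, ⟪q i, y⟫ • q (σ i) := by
    intro y
    simp [hfdef, LinearMap.smul_apply, LinearMap.sum_apply, LinearMap.smulRight_apply,
      innerₛₗ_apply_apply]
  have hσ0 : ∑ i, q (σ i) = 0 := by rw [Equiv.sum_comp σ q]; exact hq0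
  have hfq : ∀ j, f (q j) = q (σ j) := by
    intro j
    rw [hf]
    have e : ∀ i, ⟪q i, q j⟫ • q (σ i)
        = (-1 / ((n : ℝ) + 1)) • q (σ i)
          + (if i = j then (((n : ℝ) + 2) / ((n : ℝ) + 1)) • q (σ i) else 0) := by
      intro i
      rw [hgram i j]
      rcases eq_or_ne i j with rfl | hij
      · rw [if_pos rfl, if_pos rfl, ← add_smul]
        have : (1 : ℝ) = -1 / ((n : ℝ) + 1) + ((n : ℝ) + 2) / ((n : ℝ) + 1) := by
          field_simp
          ring
        rw [← this]
      · rw [if_neg hij, if_neg hij, add_zero]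
    rw [Finset.sum_congr rfl (fun i _ => e i), Finset.sum_add_distrib, ← Finset.smul_sum,
      hσ0, smul_zero, zero_add, Finset.sum_ite_eq' univ j
        (fun i => (((n : ℝ) + 2) / ((n : ℝ) + 1)) • q (σ i)), if_pos (mem_univ j), smul_smul]
    have hone : k * (((n : ℝ) + 2) / ((n : ℝ) + 1)) = 1 := by
      rw [hk]; field_simp
    rw [hone, one_smul]
  have expand : ∀ (a b : Fin (n + 2) → EuclideanSpace ℝ (Fin (n + 1)))
      (y z : EuclideanSpace ℝ (Fin (n + 1))),
      ⟪∑ i, ⟪q i, y⟫ • a i, ∑ j, ⟪q j, z⟫ • b j⟫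
        = ∑ i, ∑ j, ⟪q i, y⟫ * ⟪q j, z⟫ * ⟪a i, b j⟫ := by
    intro a b y z
    rw [sum_inner]
    refine Finset.sum_congr rfl fun i _ => ?_
    rw [real_inner_smul_left, inner_sum, Finset.mul_sum]
    refine Finset.sum_congr rfl fun j _ => ?_
    rw [real_inner_smul_right]
    ring
  have egram : ∀ i j, ⟪q (σ i), q (σ j)⟫ = ⟪q i, q j⟫ := by
    intro i j
    rcases eq_or_ne i j with rfl | hij
    · rw [hgram, hgram, if_pos rfl, if_pos rfl]
    · rw [hgram, hgram, if_neg (fun h => hij (σ.injective h)), if_neg hij]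
  have hinner : ∀ y z, ⟪f y, f z⟫ = ⟪y, z⟫ := by
    intro y z
    rw [hf y, hf z, real_inner_smul_left, real_inner_smul_right, expand]
    conv_rhs => rw [← simplex_expansion q hq1 hq0 hqij y, ← simplex_expansion q hq1 hq0 hqij z]
    rw [real_inner_smul_left, real_inner_smul_right, expand]
    exact congrArg _ (congrArg _ (Finset.sum_congr rfl fun i _ =>
      Finset.sum_congr rfl fun j _ => by rw [egram i j]))
  refine ⟨(LinearMap.isometryOfInner f hinner).toLinearIsometryEquiv rfl, fun i => ?_⟩
  rw [LinearIsometry.toLinearIsometryEquiv_apply]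
  rw [show ((LinearMap.isometryOfInner f hinner) (q i)) = f (q i) from rfl]
  exact hfq i

end Simplex

lemma simplex_key {n : ℕ} (q : Fin (n + 2) → EuclideanSpace ℝ (Fin (n + 1)))
    (hq1 : ∀ i, ‖q i‖ = 1) (hq0 : ∑ i, q i = 0)
    (hqij : ∀ i j, i ≠ j → ⟪q i, q j⟫ = -1 / (n + 1))
    (x0 v : EuclideanSpace ℝ (Fin (n + 1))) (hx0 : ‖x0‖ = 1) (hv : ‖v‖ = 1) :
    ∃ φ : EuclideanSpace ℝ (Fin (n + 1)) ≃ₗᵢ[ℝ] EuclideanSpace ℝ (Fin (n + 1)),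
      (∃ σ : Equiv.Perm (Fin (n + 2)), ∀ i, φ (q i) = q (σ i)) ∧
      1 / (4 * ((n : ℝ) + 2) ^ 4) ≤ ⟪φ x0, v⟫ := by
  set k : ℝ := ((n : ℝ) + 1) / ((n : ℝ) + 2) with hk
  have hne1 : ((n : ℝ) + 1) ≠ 0 := by positivity
  have hne2 : ((n : ℝ) + 2) ≠ 0 := by positivity
  have hkhalf : 1 / 2 ≤ k := by
    rw [hk, le_div_iff₀ (by positivity)]
    nlinarith [Nat.cast_nonneg (α := ℝ) n]
  set c : Fin (n + 2) → ℝ := fun i => ⟪q i, x0⟫ with hc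
  set d : Fin (n + 2) → ℝ := fun i => ⟪q i, v⟫ with hd
  have hsum0 : ∀ z, ∑ i, ⟪q i, z⟫ = 0 := fun z => by rw [← sum_inner, hq0, inner_zero_left]
  have hsq : ∀ z : EuclideanSpace ℝ (Fin (n + 1)), ‖z‖ = 1 → 1 ≤ ∑ i, ⟪q i, z⟫ ^ 2 := by
    intro z hz
    have h1 : ⟪(k • ∑ i, ⟪q i, z⟫ • q i : EuclideanSpace ℝ (Fin (n + 1))), z⟫
        = k * ∑ i, ⟪q i, z⟫ ^ 2 := by
      rw [real_inner_smul_left, sum_inner]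
      congr 1
      refine Finset.sum_congr rfl fun i _ => ?_
      rw [real_inner_smul_left, ← sq]
    rw [simplex_expansion q hq1 hq0 hqij z] at h1
    have h2 : ⟪z, z⟫ = 1 := by rw [real_inner_self_eq_norm_sq, hz]; norm_num
    rw [h2] at h1
    nlinarith [h1, hkhalf, Finset.sum_nonneg (fun i (_ : i ∈ (univ : Finset (Fin (n+2)))) =>
      sq_nonneg (⟪q i, z⟫)), div_le_one_of_le₀ (by linarith : (n:ℝ) + 1 ≤ (n:ℝ) + 2) (by positivity)]
  obtain ⟨σ, hσ⟩ := rearrange (N := n + 2) (by omega) c d (hsum0 x0) (hsum0 v)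
    (hsq x0 hx0) (hsq v hv)
  obtain ⟨φ, hφ⟩ := simplex_isometry q hq1 hq0 hqij σ
  refine ⟨φ, ⟨σ, hφ⟩, ?_⟩
  have hφx : φ x0 = k • ∑ i, c i • q (σ i) := by
    conv_lhs => rw [← simplex_expansion q hq1 hq0 hqij x0]
    rw [_root_.map_smul, map_sum]
    congr 1
    exact Finset.sum_congr rfl fun i _ => by rw [_root_.map_smul, hφ i]
  have hval : ⟪φ x0, v⟫ = k * ∑ i, c i * d (σ i) := by
    rw [hφx, real_inner_smul_left, sum_inner]
    congr 1
    exact Finset.sum_congr rfl fun i _ => by rw [real_inner_smul_left]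
  rw [hval]
  have hcast : (((n + 2 : ℕ) : ℝ)) = (n : ℝ) + 2 := by push_cast; ring
  rw [hcast] at hσ
  have hpos : (0 : ℝ) < ((n : ℝ) + 2) ^ 4 := by positivity
  have hT0 : 0 ≤ ∑ i, c i * d (σ i) := le_trans (by positivity) hσ
  have h4 : ((n : ℝ) + 2) ^ 4 ≠ 0 := by positivity
  calc 1 / (4 * ((n : ℝ) + 2) ^ 4) = (1 / 2) * (1 / (2 * ((n : ℝ) + 2) ^ 4)) := by
        field_simp
        ring
    _ ≤ k * ∑ i, c i * d (σ i) := by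
        apply mul_le_mul hkhalf hσ (by positivity) (by linarith)

/-- A priori upper bound: for `n ≥ 1`, `p < 0`, there is `C = C(n,p)` such that every
support function `u` of a convex body containing the origin which is positive on `𝕊ⁿ`,
invariant under the symmetry group of a regular simplex with vertices
`q₁,…,q_{n+2} ∈ 𝕊ⁿ`, and normalized by `∫_{𝕊ⁿ} u^p = |𝕊ⁿ|`, satisfies `u ≤ C` on `𝕊ⁿ`. -/
theorem stmt12 (n : ℕ) (hn : 1 ≤ n) (p : ℝ) (hp : p < 0) :
    ∃ C : ℝ, 0 < C ∧
      ∀ (q : Fin (n + 2) → EuclideanSpace ℝ (Fin (n + 1))),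
        (∀ i, ‖q i‖ = 1) → (∑ i, q i = 0) →
        (∀ i j, i ≠ j → ⟪q i, q j⟫ = -1 / (n + 1)) →
      ∀ (K : Set (EuclideanSpace ℝ (Fin (n + 1))))
        (u : EuclideanSpace ℝ (Fin (n + 1)) → ℝ),
        Convex ℝ K → IsCompact K → (0 : EuclideanSpace ℝ (Fin (n + 1))) ∈ K →
        (∀ x, u x = sSup ((fun z => ⟪x, z⟫) '' K)) →
        (∀ x, ‖x‖ = 1 → 0 < u x) →
        (∀ φ : EuclideanSpace ℝ (Fin (n + 1)) ≃ₗᵢ[ℝ] EuclideanSpace ℝ (Fin (n + 1)),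
          (∃ σ : Equiv.Perm (Fin (n + 2)), ∀ i, φ (q i) = q (σ i)) →
          ∀ x, u (φ x) = u x) →
        (∫ x : sphere (0 : EuclideanSpace ℝ (Fin (n + 1))) 1, (u x) ^ p
            ∂((volume : Measure (EuclideanSpace ℝ (Fin (n + 1)))).toSphere)) =
          (((volume : Measure (EuclideanSpace ℝ (Fin (n + 1)))).toSphere)
            Set.univ).toReal →
        ∀ x, ‖x‖ = 1 → u x ≤ C := by
  refine ⟨4 * ((n : ℝ) + 2) ^ 4, by positivity, ?_⟩
  intro q hq1 hq0 hqij K u _hKconv hKcomp h0K hu hupos hsym hnorm x hx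
  have hcont : ∀ y : EuclideanSpace ℝ (Fin (n + 1)),
      Continuous fun z : EuclideanSpace ℝ (Fin (n + 1)) => ⟪y, z⟫ :=
    fun y => continuous_const.inner continuous_id
  obtain ⟨z, hzK, hzmax⟩ := hKcomp.exists_isMaxOn ⟨0, h0K⟩ ((hcont x).continuousOn)
  have hux : u x = ⟪x, z⟫ := by
    rw [hu x]
    exact IsGreatest.csSup_eq ⟨⟨z, hzK, rfl⟩, by rintro _ ⟨w, hwK, rfl⟩; exact hzmax hwK⟩
  have huxpos := hupos x hx
  have hxz : 0 < ⟪x, z⟫ := hux ▸ huxpos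
  have hzpos : 0 < ‖z‖ := by
    refine norm_pos_iff.mpr fun h0 => ?_
    rw [h0, inner_zero_right] at hxz
    exact lt_irrefl 0 hxz
  set r : ℝ := ‖z‖ with hr
  have huxr : u x ≤ r := by
    rw [hux]
    calc ⟪x, z⟫ ≤ ‖x‖ * ‖z‖ := real_inner_le_norm x z
      _ = r := by rw [hx, one_mul]
  suffices hrC : r ≤ 4 * ((n : ℝ) + 2) ^ 4 by linarith
  set x1 : EuclideanSpace ℝ (Fin (n + 1)) := r⁻¹ • z with hx1def
  have hx1 : ‖x1‖ = 1 := by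
    rw [hx1def, norm_smul, Real.norm_eq_abs, abs_inv, abs_of_pos hzpos, ← hr,
      inv_mul_cancel₀ hzpos.ne']
  have hzx1 : z = r • x1 := by
    rw [hx1def, smul_smul, mul_inv_cancel₀ hzpos.ne', one_smul]
  set ρ : ℝ := 1 / (4 * ((n : ℝ) + 2) ^ 4) with hρ
  have hρpos : 0 < ρ := by rw [hρ]; positivity
  have hlow : ∀ v : EuclideanSpace ℝ (Fin (n + 1)), ‖v‖ = 1 → ρ * r ≤ u v := by
    intro v hv
    obtain ⟨φ, hperm, hbound⟩ := simplex_key q hq1 hq0 hqij x1 v hx1 hv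
    have h1 : u v = u (φ.symm v) := by
      conv_lhs => rw [← φ.apply_symm_apply v]
      exact hsym φ hperm (φ.symm v)
    have h2 : ⟪φ.symm v, z⟫ ≤ u (φ.symm v) := by
      rw [hu (φ.symm v)]
      exact le_csSup (hKcomp.image (hcont _)).bddAbove ⟨z, hzK, rfl⟩
    have h3 : ⟪φ.symm v, z⟫ = r * ⟪φ x1, v⟫ := by
      rw [hzx1, real_inner_smul_right]
      congr 1
      rw [← φ.inner_map_map (φ.symm v) x1, φ.apply_symm_apply, real_inner_comm]
    have h4 : ρ * r ≤ r * ⟪φ x1, v⟫ := by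
      rw [mul_comm ρ r]
      exact mul_le_mul_of_nonneg_left hbound hzpos.le
    linarith
  set μ := (volume : Measure (EuclideanSpace ℝ (Fin (n + 1)))).toSphere with hμ
  have hμ0 : μ Set.univ ≠ 0 := by
    rw [hμ, Measure.toSphere_apply_univ]
    refine mul_ne_zero ?_ (measure_ball_pos volume 0 one_pos).ne'
    simp [finrank_euclideanSpace_fin]
  have hA : 0 < (μ Set.univ).toReal := ENNReal.toReal_pos hμ0 (measure_ne_top μ _)
  have hle : ∀ w : sphere (0 : EuclideanSpace ℝ (Fin (n + 1))) 1,
      (u w) ^ p ≤ (ρ * r) ^ p := by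
    intro w
    have hw : ‖(w : EuclideanSpace ℝ (Fin (n + 1)))‖ = 1 := norm_eq_of_mem_sphere w
    exact Real.rpow_le_rpow_of_nonpos (by positivity) (hlow w hw) hp.le
  have hint : (∫ w : sphere (0 : EuclideanSpace ℝ (Fin (n + 1))) 1, (u w) ^ p ∂μ)
      ≤ ∫ _w : sphere (0 : EuclideanSpace ℝ (Fin (n + 1))) 1, (ρ * r) ^ p ∂μ := by
    refine integral_mono_of_nonneg (Filter.Eventually.of_forall fun w => ?_)
      (integrable_const _) (Filter.Eventually.of_forall fun w => hle w)
    exact Real.rpow_nonneg (hupos _ (norm_eq_of_mem_sphere w)).le _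
  rw [hnorm, integral_const, smul_eq_mul] at hint
  have h1p : 1 ≤ (ρ * r) ^ p := (le_mul_iff_one_le_right hA).mp hint
  have hρr : ρ * r ≤ 1 := by
    by_contra h
    push_neg at h
    have := Real.rpow_lt_one_of_one_lt_of_neg h hp
    linarith
  have hCρ : (4 * ((n : ℝ) + 2) ^ 4) * ρ = 1 := by
    rw [hρ]
    field_simp
  nlinarith [mul_le_mul_of_nonneg_left hρr (by positivity : (0 : ℝ) ≤ 4 * ((n : ℝ) + 2) ^ 4),
    hCρ, hzpos]
end

section
/- Let n ≥ 1 and p ≤ −n. Suppose v : B₂ ⊂ ℝⁿ → (0,∞) is convex, v(0) = m > 0, |v(y) − m| ≤ C₁|y| on B₁, and ∫_{B₁} v^p dy ≤ C₂. Then m ≥ c(n, p, C₁, C₂) > 0; explicitly, ∫_{B₁}(m + C₁|y|)^p dy diverges to +∞ as m → 0⁺ when p ≤ −n, giving a positive lower bound on m. -/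
open MeasureTheory Metric

/-- Lower barrier estimate: for `n ≥ 1`, `p ≤ −n` and constants `C₁, C₂ > 0`, there is
`c = c(n,p,C₁,C₂) > 0` such that any positive convex `v` on `B₂ ⊂ ℝⁿ` with `v(0) = m`,
`|v(y) − m| ≤ C₁|y|` on `B₁` and `∫_{B₁} v^p ≤ C₂` satisfies `m ≥ c`. Indeed
`∫_{B₁}(m + C₁|y|)^p dy → ∞` as `m → 0⁺` when `p ≤ −n`. -/
theorem stmt13 (n : ℕ) (hn : 1 ≤ n) (p : ℝ) (hp : p ≤ -(n : ℝ))
    (C₁ C₂ : ℝ) (hC₁ : 0 < C₁) (hC₂ : 0 < C₂) :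
    ∃ c : ℝ, 0 < c ∧
      ∀ (v : EuclideanSpace ℝ (Fin n) → ℝ) (m : ℝ),
        ConvexOn ℝ (ball (0 : EuclideanSpace ℝ (Fin n)) 2) v →
        (∀ y ∈ ball (0 : EuclideanSpace ℝ (Fin n)) 2, 0 < v y) →
        v 0 = m → 0 < m →
        (∀ y ∈ ball (0 : EuclideanSpace ℝ (Fin n)) 1, |v y - m| ≤ C₁ * ‖y‖) →
        (∫ y in ball (0 : EuclideanSpace ℝ (Fin n)) 1, v y ^ p) ≤ C₂ →
        c ≤ m := by
  classical
  set E := EuclideanSpace ℝ (Fin n) with hEdef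
  haveI : Nontrivial E := by
    apply Module.nontrivial_of_finrank_pos (R := ℝ)
    rw [finrank_euclideanSpace_fin]; omega
  have hE : Module.finrank ℝ E = n := finrank_euclideanSpace_fin
  have hp0 : p ≤ 0 := hp.trans (by simp)
  -- volume of unit ball
  set ω : ℝ := (volume (ball (0:E) 1)).toReal with hωdef
  have hballfin : volume (ball (0:E) 1) ≠ ⊤ := (measure_ball_lt_top).ne
  have hω : 0 < ω := ENNReal.toReal_pos (measure_ball_pos _ _ one_pos).ne' hballfin
  set A : ℝ := (2*C₁) ^ p * ω / 2 with hAdef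
  have h2C₁ : (0:ℝ) < 2*C₁ := by linarith
  have hA : 0 < A := by
    have := Real.rpow_pos_of_pos h2C₁ p
    positivity
  obtain ⟨K, hK⟩ := exists_nat_gt (C₂ / A)
  have hKA : C₂ < K * A := by
    rwa [div_lt_iff₀ hA] at hK
  refine ⟨C₁ / 2 ^ K, by positivity, ?_⟩
  intro v m hconv hpos hv0 hm hlip hint
  by_contra hc
  push_neg at hc
  -- radii and annuli
  set r : ℕ → ℝ := fun k => (1/2 : ℝ) ^ k with hrdef
  have hrpos : ∀ k, 0 < r k := fun k => by positivity
  have hrle1 : ∀ k, r k ≤ 1 := fun k => pow_le_one₀ (by norm_num) (by norm_num)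
  have hrmono : ∀ {i j : ℕ}, i ≤ j → r j ≤ r i := fun {i j} h =>
    pow_le_pow_of_le_one (by norm_num) (by norm_num) h
  set S : ℕ → Set E := fun k => ball (0:E) (r k) \ ball (0:E) (r (k+1)) with hSdef
  have hSmeas : ∀ k, MeasurableSet (S k) :=
    fun k => measurableSet_ball.diff measurableSet_ball
  have hSsub1 : ∀ k, S k ⊆ ball (0:E) 1 := fun k =>
    (Set.diff_subset).trans (ball_subset_ball (hrle1 k))
  have hsub2 : ball (0:E) 1 ⊆ ball (0:E) 2 := ball_subset_ball (by norm_num)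
  -- integrability of v^p on ball 1
  have hcb : closedBall (0:E) 1 ⊆ ball (0:E) 2 := closedBall_subset_ball (by norm_num)
  have hvcont : ContinuousOn v (ball (0:E) 2) := hconv.continuousOn isOpen_ball
  have hgcont : ContinuousOn (fun y => v y ^ p) (closedBall (0:E) 1) := by
    apply ContinuousOn.rpow_const (hvcont.mono hcb)
    exact fun x hx => Or.inl (ne_of_gt (hpos x (hcb hx)))
  have hInt : IntegrableOn (fun y => v y ^ p) (ball (0:E) 1) := by
    exact (hgcont.integrableOn_compact (isCompact_closedBall _ _)).mono_set
      ball_subset_closedBall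
  have hIntS : ∀ k, IntegrableOn (fun y => v y ^ p) (S k) :=
    fun k => hInt.mono_set (hSsub1 k)
  have hnonneg : ∀ y ∈ ball (0:E) 1, 0 ≤ v y ^ p :=
    fun y hy => (Real.rpow_pos_of_pos (hpos y (hsub2 hy)) p).le
  -- measure of annulus
  have hμS : ∀ k, A ≤ (2*C₁)^p * ((2:ℝ)^k)^(n:ℕ) * (volume (S k)).toReal := by
    intro k
    have hb : ∀ j, volume (ball (0:E) (r j)) = ENNReal.ofReal ((r j)^(n:ℕ)) * volume (ball (0:E) 1) := by
      intro j
      rw [Measure.addHaar_ball volume (0:E) (hrpos j).le, hE]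
    have hsub : ball (0:E) (r (k+1)) ⊆ ball (0:E) (r k) :=
      ball_subset_ball (hrmono (Nat.le_succ k))
    have hdiff : volume (S k) = volume (ball (0:E) (r k)) - volume (ball (0:E) (r (k+1))) :=
      measure_diff hsub measurableSet_ball.nullMeasurableSet measure_ball_lt_top.ne
    have hle : volume (ball (0:E) (r (k+1))) ≤ volume (ball (0:E) (r k)) :=
      measure_mono hsub
    have htR : (volume (S k)).toReal = (r k)^(n:ℕ) * ω - (r (k+1))^(n:ℕ) * ω := by
      rw [hdiff, ENNReal.toReal_sub_of_le hle ((hb k ▸ ENNReal.mul_ne_top ENNReal.ofReal_ne_top hballfin)),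
        hb k, hb (k+1), ENNReal.toReal_mul, ENNReal.toReal_mul,
        ENNReal.toReal_ofReal (by positivity), ENNReal.toReal_ofReal (by positivity)]
    have hhalf : (r (k+1))^(n:ℕ) ≤ (r k)^(n:ℕ) / 2 := by
      have : r (k+1) = r k * (1/2) := by rw [hrdef]; ring
      rw [this, mul_pow]
      have h1 : ((1/2:ℝ))^n ≤ 1/2 :=
        pow_le_of_le_one (by norm_num) (by norm_num) (by omega)
      have h2 : (0:ℝ) ≤ (r k)^n := by positivity
      calc (r k)^n * (1/2:ℝ)^n ≤ (r k)^n * (1/2) := by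
            exact mul_le_mul_of_nonneg_left h1 h2
        _ = (r k)^n / 2 := by ring
    have hμlb : (r k)^(n:ℕ) * ω / 2 ≤ (volume (S k)).toReal := by
      rw [htR]
      have := mul_le_mul_of_nonneg_right hhalf hω.le
      nlinarith
    have hcancel : ((2:ℝ)^k)^(n:ℕ) * ((r k)^(n:ℕ)) = 1 := by
      have hrk : r k = (1/2:ℝ)^k := rfl
      rw [hrk, ← mul_pow, ← mul_pow]
      norm_num
    have h2Cp : (0:ℝ) < (2*C₁)^p := Real.rpow_pos_of_pos h2C₁ p
    calc A = (2*C₁)^p * ((2:ℝ)^k)^(n:ℕ) * ((r k)^(n:ℕ) * ω / 2) := by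
          rw [hAdef]; field_simp; nlinarith [hcancel]
      _ ≤ (2*C₁)^p * ((2:ℝ)^k)^(n:ℕ) * (volume (S k)).toReal := by
          apply mul_le_mul_of_nonneg_left hμlb
          positivity
  -- pointwise bound on annulus
  have hpt : ∀ k < K, ∀ y ∈ S k, (2*C₁)^p * ((2:ℝ)^k)^(n:ℕ) ≤ v y ^ p := by
    intro k hk y hy
    have hy1 : y ∈ ball (0:E) 1 := hSsub1 k hy
    have hvpos : 0 < v y := hpos y (hsub2 hy1)
    have hnorm : ‖y‖ < r k := by
      have := hy.1; rwa [mem_ball, dist_zero_right] at this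
    have hmk : m ≤ C₁ * r k := by
      have h1 : (C₁ / 2^K : ℝ) ≤ C₁ * r k := by
        rw [hrdef]
        simp only [one_div, inv_pow]
        rw [div_eq_mul_inv]
        apply mul_le_mul_of_nonneg_left _ hC₁.le
        apply inv_anti₀ (by positivity)
        exact pow_le_pow_right₀ (by norm_num) hk.le
      linarith
    have hub : v y ≤ 2*C₁ * r k := by
      have := hlip y hy1
      have h2 := abs_le.mp this
      have : v y ≤ m + C₁ * ‖y‖ := by linarith [h2.2]
      nlinarith [hnorm, hC₁]
    have hX : (2*C₁ * r k) ^ p ≤ v y ^ p :=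
      Real.rpow_le_rpow_of_nonpos hvpos hub hp0
    refine le_trans ?_ hX
    have hrw : (2*C₁ * r k) ^ p = (2*C₁)^p * ((2:ℝ)^k : ℝ)^(-p) := by
      have hrk : r k = ((2:ℝ)^k)⁻¹ := by
        have : r k = (1/2:ℝ)^k := rfl
        rw [this, one_div, inv_pow]
      rw [Real.mul_rpow h2C₁.le (hrpos k).le, hrk,
        Real.inv_rpow (by positivity) p, Real.rpow_neg (by positivity) p]
    rw [hrw]
    apply mul_le_mul_of_nonneg_left _ (Real.rpow_pos_of_pos h2C₁ p).le
    rw [← Real.rpow_natCast ((2:ℝ)^k) n]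
    apply Real.rpow_le_rpow_of_exponent_le (one_le_pow₀ (by norm_num))
    linarith
  -- per-annulus integral bound
  have hannulus : ∀ k < K, A ≤ ∫ y in S k, v y ^ p := by
    intro k hk
    have hconst : ∫ y in S k, ((2*C₁)^p * ((2:ℝ)^k)^(n:ℕ)) ∂volume
        = (volume (S k)).toReal * ((2*C₁)^p * ((2:ℝ)^k)^(n:ℕ)) := by
      rw [setIntegral_const]; simp [smul_eq_mul, Measure.real]
    have hμfin : volume (S k) < ⊤ :=
      lt_of_le_of_lt (measure_mono (hSsub1 k)) measure_ball_lt_top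
    have h1 : ∫ y in S k, ((2*C₁)^p * ((2:ℝ)^k)^(n:ℕ)) ∂volume ≤ ∫ y in S k, v y ^ p := by
      apply setIntegral_mono_on ((integrableOn_const_iff).mpr (Or.inr hμfin)) (hIntS k) (hSmeas k)
      exact hpt k hk
    calc A ≤ (2*C₁)^p * ((2:ℝ)^k)^(n:ℕ) * (volume (S k)).toReal := hμS k
      _ = ∫ y in S k, ((2*C₁)^p * ((2:ℝ)^k)^(n:ℕ)) ∂volume := by rw [hconst]; ring
      _ ≤ _ := h1
  -- disjointness
  have hdisj : Set.Pairwise (↑(Finset.range K)) (Function.onFun Disjoint S) := by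
    have key : ∀ i j : ℕ, i < j → Disjoint (S i) (S j) := by
      intro i j h
      have hsub : S j ⊆ ball (0:E) (r (i+1)) :=
        (Set.diff_subset).trans (ball_subset_ball (hrmono (by omega)))
      exact Set.disjoint_left.mpr fun x hxi hxj => hxi.2 (hsub hxj)
    intro i _ j _ hij
    rcases lt_or_gt_of_ne hij with h | h
    · exact key i j h
    · exact (key j i h).symm
  -- sum up
  have hunion : (⋃ k ∈ Finset.range K, S k) ⊆ ball (0:E) 1 := by
    simp only [Set.iUnion_subset_iff]
    exact fun k _ => hSsub1 k
  have hsum : ∫ y in ⋃ k ∈ Finset.range K, S k, v y ^ p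
      = ∑ k ∈ Finset.range K, ∫ y in S k, v y ^ p :=
    integral_biUnion_finset (Finset.range K) (fun i _ => hSmeas i) hdisj
      (fun i _ => hIntS i)
  have hmono : ∫ y in ⋃ k ∈ Finset.range K, S k, v y ^ p ≤ ∫ y in ball (0:E) 1, v y ^ p := by
    apply setIntegral_mono_set hInt
    · exact (ae_restrict_iff' measurableSet_ball).mpr (ae_of_all _ hnonneg)
    · exact HasSubset.Subset.eventuallyLE hunion
  have hKA' : (K:ℝ) * A ≤ ∑ k ∈ Finset.range K, ∫ y in S k, v y ^ p := by
    calc (K:ℝ) * A = ∑ _k ∈ Finset.range K, A := by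
          rw [Finset.sum_const, Finset.card_range]; ring
      _ ≤ _ := Finset.sum_le_sum (fun k hk => hannulus k (Finset.mem_range.mp hk))
  linarith [hsum ▸ hmono]
end
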